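/- arXiv:2203.10813 — 6 statements merged into one kernel-verified Lean document; each statement's English description precedes it below -/
import Mathlib

section
/- Let p be a positive integer and j an integer with 2 ≤ j ≤ floor(p/2)+1. Then the double sum over i from 1 to p-1 and m from 0 to p+2-2j of (-1)^i * binom(p,i) * binom(p+2j, m-1+2j) * binom(p+2-2j, m) * i^(p+2-2j-m) * (i-p)^m equals 2*(-1)^(p+1) * binom(p+2j, 2j-1) * p^(p+2-2j). -/
open Finset fwdDiff

lemma neg_one_pow_congr' {a b : ℕ} (h : a % 2 = b % 2) : (-1 : ℤ) ^ a = (-1) ^ b := by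
  rcases Nat.even_or_odd a with ha | ha
  · have ha2 := Nat.even_iff.mp ha
    rw [ha.neg_one_pow, (Nat.even_iff.mpr (by omega) : Even b).neg_one_pow]
  · have ha2 := Nat.odd_iff.mp ha
    rw [ha.neg_one_pow, (Nat.odd_iff.mpr (by omega) : Odd b).neg_one_pow]

lemma fwdDiff_iter_pow_eq_zero (p t : ℕ) (ht : t < p) (y : ℕ) :
    (Δ_[1])^[p] (fun x : ℕ ↦ (x : ℤ) ^ t) y = 0 := by
  induction p generalizing t y with
  | zero => omega
  | succ p IH =>
    rw [Function.iterate_succ_apply]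
    have hΔ : Δ_[1] (fun x : ℕ ↦ (x : ℤ) ^ t)
        = ∑ s ∈ range t, (t.choose s : ℤ) • (fun x : ℕ ↦ (x : ℤ) ^ s) := by
      ext x
      simp only [fwdDiff, Finset.sum_apply, Pi.smul_apply, smul_eq_mul]
      have h1 : ((x + 1 : ℕ) : ℤ) ^ t = ((x : ℤ) + 1) ^ t := by push_cast; ring
      rw [h1, add_pow, Finset.sum_range_succ]
      simp [mul_comm]
    rw [hΔ, fwdDiff_iter_finset_sum, Finset.sum_apply]
    refine Finset.sum_eq_zero fun s hs => ?_
    have hs' : s < t := Finset.mem_range.mp hs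
    rw [fwdDiff_iter_const_smul, Pi.smul_apply, IH s (by omega) y, smul_zero]

lemma alt_sum_pow (p t : ℕ) (ht : t < p) :
    ∑ i ∈ range (p + 1), (-1 : ℤ) ^ i * p.choose i * (i : ℤ) ^ t = 0 := by
  have h := fwdDiff_iter_eq_sum_shift (1 : ℕ) (fun x : ℕ ↦ (x : ℤ) ^ t) p 0
  rw [fwdDiff_iter_pow_eq_zero p t ht 0] at h
  have h2 : ∑ k ∈ range (p + 1), (-1 : ℤ) ^ (p - k) * p.choose k * (k : ℤ) ^ t = 0 := by
    rw [eq_comm] at h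
    refine Eq.trans ?_ h
    refine Finset.sum_congr rfl fun k hk => ?_
    simp [smul_eq_mul, mul_assoc]
  calc ∑ i ∈ range (p + 1), (-1 : ℤ) ^ i * p.choose i * (i : ℤ) ^ t
      = ∑ i ∈ range (p + 1), (-1 : ℤ) ^ p * ((-1 : ℤ) ^ (p - i) * p.choose i * (i : ℤ) ^ t) := by
        refine Finset.sum_congr rfl fun i hi => ?_
        have hi' : i < p + 1 := Finset.mem_range.mp hi
        have key : (-1 : ℤ) ^ p * (-1 : ℤ) ^ (p - i) = (-1 : ℤ) ^ i := by
          rw [← pow_add]; exact neg_one_pow_congr' (by omega)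
        rw [← mul_assoc, ← mul_assoc, key]
    _ = 0 := by rw [← Finset.mul_sum, h2, mul_zero]

lemma alt_sum_pow_mul (p a b : ℕ) (hab : a + b < p) :
    ∑ i ∈ range (p + 1), (-1 : ℤ) ^ i * p.choose i * (i : ℤ) ^ a * ((i : ℤ) - (p : ℤ)) ^ b = 0 := by
  have hexp : ∀ i : ℕ, ((i : ℤ) - (p : ℤ)) ^ b
      = ∑ c ∈ range (b + 1), (i : ℤ) ^ c * (-(p : ℤ)) ^ (b - c) * b.choose c := by
    intro i; rw [sub_eq_add_neg, add_pow]
  simp_rw [hexp, Finset.mul_sum]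
  rw [Finset.sum_comm]
  refine Finset.sum_eq_zero fun c hc => ?_
  have hc' : c < b + 1 := Finset.mem_range.mp hc
  have key := alt_sum_pow p (a + c) (by omega)
  calc ∑ i ∈ range (p + 1),
        (-1 : ℤ) ^ i * p.choose i * (i : ℤ) ^ a * ((i : ℤ) ^ c * (-(p : ℤ)) ^ (b - c) * b.choose c)
      = ((-(p : ℤ)) ^ (b - c) * b.choose c)
          * ∑ i ∈ range (p + 1), (-1 : ℤ) ^ i * p.choose i * (i : ℤ) ^ (a + c) := by
        rw [Finset.mul_sum]
        exact Finset.sum_congr rfl fun i _ => by rw [pow_add]; ring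
    _ = 0 := by rw [key, mul_zero]
theorem stmt_3 (p j : ℕ) (hp : 0 < p) (hj2 : 2 ≤ j) (hj : j ≤ p / 2 + 1) :
    ∑ i ∈ Finset.Icc 1 (p - 1), ∑ m ∈ Finset.range (p + 3 - 2 * j),
        (-1 : ℤ) ^ i * (p.choose i : ℤ) * ((p + 2 * j).choose (m + 2 * j - 1) : ℤ)
          * ((p + 2 - 2 * j).choose m : ℤ) * (i : ℤ) ^ (p + 2 - 2 * j - m)
          * ((i : ℤ) - (p : ℤ)) ^ m
      = 2 * (-1 : ℤ) ^ (p + 1) * ((p + 2 * j).choose (2 * j - 1) : ℤ)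
          * (p : ℤ) ^ (p + 2 - 2 * j) := by
  have hp2 : 2 ≤ p := by omega
  have h2j : 2 * j ≤ p + 2 := by omega
  set q := p + 2 - 2 * j with hq
  have hqp : q + 2 ≤ p := by omega
  have hrange : p + 3 - 2 * j = q + 1 := by omega
  rw [hrange]
  have hfull : ∑ i ∈ Finset.range (p + 1), ∑ m ∈ Finset.range (q + 1),
      (-1 : ℤ) ^ i * (p.choose i : ℤ) * ((p + 2 * j).choose (m + 2 * j - 1) : ℤ)
        * (q.choose m : ℤ) * (i : ℤ) ^ (q - m) * ((i : ℤ) - (p : ℤ)) ^ m = 0 := by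
    rw [Finset.sum_comm]
    refine Finset.sum_eq_zero fun m hm => ?_
    have hm' : m ≤ q := by simpa [Nat.lt_succ_iff] using hm
    calc ∑ i ∈ Finset.range (p + 1),
          (-1 : ℤ) ^ i * (p.choose i : ℤ) * ((p + 2 * j).choose (m + 2 * j - 1) : ℤ)
            * (q.choose m : ℤ) * (i : ℤ) ^ (q - m) * ((i : ℤ) - (p : ℤ)) ^ m
        = (((p + 2 * j).choose (m + 2 * j - 1) : ℤ) * (q.choose m : ℤ))
            * ∑ i ∈ Finset.range (p + 1),
                (-1 : ℤ) ^ i * (p.choose i : ℤ) * (i : ℤ) ^ (q - m)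
                  * ((i : ℤ) - (p : ℤ)) ^ m := by
          rw [Finset.mul_sum]; exact Finset.sum_congr rfl fun i _ => by ring
      _ = 0 := by
          rw [alt_sum_pow_mul p (q - m) m (by omega), mul_zero]
  have hins : Finset.range (p + 1) = insert 0 (insert p (Finset.Icc 1 (p - 1))) := by
    ext i
    simp only [Finset.mem_range, Finset.mem_insert, Finset.mem_Icc]
    omega
  have h0 : (0 : ℕ) ∉ insert p (Finset.Icc 1 (p - 1)) := by
    simp only [Finset.mem_insert, Finset.mem_Icc]; omega
  have hpn : p ∉ Finset.Icc 1 (p - 1) := by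
    simp only [Finset.mem_Icc]; omega
  rw [hins, Finset.sum_insert h0, Finset.sum_insert hpn] at hfull
  have hA0 : ∑ m ∈ Finset.range (q + 1),
      (-1 : ℤ) ^ (0 : ℕ) * (p.choose 0 : ℤ) * ((p + 2 * j).choose (m + 2 * j - 1) : ℤ)
        * (q.choose m : ℤ) * ((0 : ℕ) : ℤ) ^ (q - m) * (((0 : ℕ) : ℤ) - (p : ℤ)) ^ m
      = (-1 : ℤ) ^ p * ((p + 2 * j).choose (2 * j - 1) : ℤ) * (p : ℤ) ^ q := by
    rw [Finset.sum_eq_single_of_mem q (Finset.self_mem_range_succ q)]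
    · have hidx : q + 2 * j - 1 = p + 1 := by omega
      have hsym : (p + 2 * j).choose (p + 1) = (p + 2 * j).choose (2 * j - 1) := by
        rw [← Nat.choose_symm (show 2 * j - 1 ≤ p + 2 * j by omega)]
        congr 1
        omega
      have hpar : (-1 : ℤ) ^ q = (-1 : ℤ) ^ p := neg_one_pow_congr' (by omega)
      rw [hidx, hsym]
      have hneg : ((0 : ℤ) - (p : ℤ)) ^ q = (-1 : ℤ) ^ q * (p : ℤ) ^ q := by
        rw [zero_sub, neg_pow]
      simp only [pow_zero, Nat.choose_zero_right, Nat.choose_self, Nat.cast_one,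
        Nat.cast_zero, Nat.sub_self, one_mul, mul_one]
      rw [hneg, hpar]
      ring
    · intro b hb hbq
      have hb' : b < q + 1 := Finset.mem_range.mp hb
      have : q - b ≠ 0 := by omega
      simp [zero_pow this]
  have hAp : ∑ m ∈ Finset.range (q + 1),
      (-1 : ℤ) ^ p * (p.choose p : ℤ) * ((p + 2 * j).choose (m + 2 * j - 1) : ℤ)
        * (q.choose m : ℤ) * ((p : ℕ) : ℤ) ^ (q - m) * (((p : ℕ) : ℤ) - (p : ℤ)) ^ m
      = (-1 : ℤ) ^ p * ((p + 2 * j).choose (2 * j - 1) : ℤ) * (p : ℤ) ^ q := by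
    rw [Finset.sum_eq_single_of_mem 0 (Finset.mem_range.mpr (by omega))]
    · simp only [zero_add, Nat.sub_zero, Nat.choose_self, Nat.choose_zero_right,
        Nat.cast_one, pow_zero, sub_self, one_mul, mul_one]
    · intro b hb hbq
      simp [sub_self, zero_pow hbq]
  rw [hA0, hAp] at hfull
  have hpow : (-1 : ℤ) ^ (p + 1) = -(-1 : ℤ) ^ p := by rw [pow_succ]; ring
  rw [hpow]
  linarith
end

section
/- Let p be a positive integer and j = 1. Then the double sum over i from 1 to p-1 and m from 0 to p of (-1)^i * binom(p,i) * binom(p+2, m+1) * binom(p, m) * i^(p-m) * (i-p)^m equals 2*(-1)^p * ((2p+1)!/(p+1)! - (p+2)*p^p). -/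
open Finset


def Spow (p j : ℕ) : ℤ :=
  ∑ i ∈ range (p + 1), (-1 : ℤ) ^ i * (p.choose i : ℤ) * (i : ℤ) ^ j
lemma Spow_def (p j : ℕ) : Spow p j = ∑ i ∈ range (p + 1), (-1 : ℤ) ^ i * (p.choose i : ℤ) * (i : ℤ) ^ j := rfl


lemma Spow_rec (p j : ℕ) :
    Spow (p + 1) (j + 1) = -(p + 1) * ∑ k ∈ range (j + 1), (j.choose k : ℤ) * Spow p k := by
  rw [Spow, Finset.sum_range_succ']
  simp only [Nat.cast_zero, zero_pow (Nat.succ_ne_zero j), mul_zero, add_zero]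
  have h1 : ∀ l, ((p + 1).choose (l + 1) : ℤ) * (l + 1 : ℤ) = (p + 1) * (p.choose l : ℤ) := by
    intro l
    have := Nat.add_one_mul_choose_eq p l
    have : ((p+1) * p.choose l : ℕ) = ((p+1).choose (l+1) * (l+1) : ℕ) := this
    have := congrArg (Nat.cast : ℕ → ℤ) this
    push_cast at this
    linarith
  calc ∑ l ∈ range (p + 1), (-1 : ℤ) ^ (l + 1) * ((p + 1).choose (l + 1) : ℤ) * ((l : ℤ) + 1) ^ (j + 1)
      = ∑ l ∈ range (p + 1), -((p + 1) * ((-1 : ℤ) ^ l * (p.choose l : ℤ) * ((l : ℤ) + 1) ^ j)) := by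
        apply Finset.sum_congr rfl
        intro l _
        have h2 := h1 l
        rw [pow_succ, pow_succ ((l : ℤ) + 1) j]
        push_cast
        linear_combination (-(-(1:ℤ))^l * ((l:ℤ)+1)^j) * h2
    _ = -(p + 1) * ∑ l ∈ range (p + 1), (-1 : ℤ) ^ l * (p.choose l : ℤ) * ((l : ℤ) + 1) ^ j := by
        rw [Finset.mul_sum]; apply Finset.sum_congr rfl; intros; push_cast; ring
    _ = -(p + 1) * ∑ k ∈ range (j + 1), (j.choose k : ℤ) * Spow p k := by
        congr 1
        have expand : ∀ l : ℕ, ((l : ℤ) + 1) ^ j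
            = ∑ k ∈ range (j + 1), (l : ℤ) ^ k * (j.choose k : ℤ) := by
          intro l
          have := add_pow (l : ℤ) 1 j
          simpa using this
        simp_rw [expand, Finset.mul_sum]
        rw [Finset.sum_comm]
        simp_rw [Spow, Finset.mul_sum]
        apply Finset.sum_congr rfl; intros; apply Finset.sum_congr rfl; intros; ring


lemma Spow_lt : ∀ p j : ℕ, j < p → Spow p j = 0 := by
  intro p
  induction p with
  | zero => intro j h; omega
  | succ p ih =>
    intro j hj
    match j with
    | 0 =>
      rw [Spow_def]
      simp only [pow_zero, mul_one]
      simpa using Int.alternating_sum_range_choose_of_ne (Nat.succ_ne_zero p)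
    | j + 1 =>
      rw [Spow_rec]
      have : ∑ k ∈ range (j + 1), (j.choose k : ℤ) * Spow p k = 0 := by
        apply Finset.sum_eq_zero
        intro k hk
        rw [ih k (by simp at hk; omega), mul_zero]
      rw [this, mul_zero]

lemma Spow_diag : ∀ p : ℕ, Spow p p = (-1 : ℤ) ^ p * (p.factorial : ℤ) := by
  intro p
  induction p with
  | zero => rw [Spow_def]; simp
  | succ p ih =>
    rw [Spow_rec, Finset.sum_eq_single p]
    · rw [Nat.choose_self, ih]
      push_cast [Nat.factorial_succ, pow_succ]
      ring
    · intro k hk hne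
      rw [Spow_lt p k (by simp at hk; omega), mul_zero]
    · intro h; simp at h


lemma Spow_mixed (p a b : ℕ) (hab : a + b = p) :
    ∑ i ∈ range (p + 1), (-1 : ℤ) ^ i * (p.choose i : ℤ) * (i : ℤ) ^ a * ((i : ℤ) - (p : ℤ)) ^ b
      = (-1 : ℤ) ^ p * (p.factorial : ℤ) := by
  have expand : ∀ i : ℕ, ((i : ℤ) - (p : ℤ)) ^ b
      = ∑ k ∈ range (b + 1), (i : ℤ) ^ k * (-(p : ℤ)) ^ (b - k) * (b.choose k : ℤ) := by
    intro i
    have := add_pow (i : ℤ) (-(p : ℤ)) b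
    simpa [sub_eq_add_neg] using this
  simp_rw [expand, Finset.mul_sum]
  rw [Finset.sum_comm]
  have step : ∀ k ∈ range (b + 1),
      ∑ i ∈ range (p + 1), (-1 : ℤ) ^ i * (p.choose i : ℤ) * (i : ℤ) ^ a *
          ((i : ℤ) ^ k * (-(p : ℤ)) ^ (b - k) * (b.choose k : ℤ))
        = (-(p : ℤ)) ^ (b - k) * (b.choose k : ℤ) * Spow p (a + k) := by
    intro k _
    rw [Spow_def, Finset.mul_sum]
    apply Finset.sum_congr rfl
    intro i _
    rw [pow_add]
    ring
  rw [Finset.sum_congr rfl step, Finset.sum_eq_single b]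
  · rw [hab, Spow_diag]; simp
  · intro k hk hne
    rw [Spow_lt p (a + k) (by simp at hk; omega), mul_zero]
  · intro h; simp at h

lemma vander (p : ℕ) :
    ∑ m ∈ range (p + 1), (p + 2).choose (m + 1) * p.choose m = (2 * p + 2).choose (p + 1) := by
  have h : 2 * p + 2 = (p + 2) + p := by ring
  rw [h, Nat.add_choose_eq]
  rw [Finset.Nat.sum_antidiagonal_eq_sum_range_succ (fun a b => (p + 2).choose a * p.choose b)]
  conv_rhs => rw [Finset.sum_range_succ']
  have : (p + 2).choose 0 * p.choose (p + 1 - 0) = 0 := by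
    simp [Nat.choose_eq_zero_of_lt (show p < p + 1 by omega)]
  rw [this, add_zero]
  apply Finset.sum_congr rfl
  intro m hm
  simp at hm
  congr 1
  rw [show p + 1 - (m + 1) = p - m by omega, Nat.choose_symm (by omega)]


lemma fact_arith (p : ℕ) :
    p.factorial * (2 * p + 2).choose (p + 1) = 2 * ((2 * p + 1).factorial / (p + 1).factorial) := by
  have hd : (p + 1).factorial ∣ (2 * p + 1).factorial :=
    Nat.factorial_dvd_factorial (by omega)
  have hK : (2 * p + 1).factorial / (p + 1).factorial * (p + 1).factorial
      = (2 * p + 1).factorial := Nat.div_mul_cancel hd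
  have hc := Nat.choose_mul_factorial_mul_factorial (show p + 1 ≤ 2 * p + 2 by omega)
  rw [show 2 * p + 2 - (p + 1) = p + 1 by omega] at hc
  have hpos : 0 < (p + 1).factorial * (p + 1).factorial :=
    Nat.mul_pos (Nat.factorial_pos _) (Nat.factorial_pos _)
  apply Nat.eq_of_mul_eq_mul_right hpos
  calc p.factorial * (2 * p + 2).choose (p + 1) * ((p + 1).factorial * (p + 1).factorial)
      = p.factorial * ((2 * p + 2).choose (p + 1) * (p + 1).factorial * (p + 1).factorial) := by ring
    _ = p.factorial * (2 * p + 2).factorial := by rw [hc]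
    _ = p.factorial * ((2 * p + 2) * (2 * p + 1).factorial) := by
        rw [show 2 * p + 2 = (2 * p + 1) + 1 by omega, Nat.factorial_succ]
    _ = 2 * ((2 * p + 1).factorial / (p + 1).factorial * (p + 1).factorial)
          * ((p + 1) * p.factorial) := by rw [hK]; ring
    _ = 2 * ((2 * p + 1).factorial / (p + 1).factorial) * ((p + 1).factorial * (p + 1).factorial) := by
        rw [show (p + 1).factorial = (p + 1) * p.factorial from Nat.factorial_succ p]; ring

theorem stmt_4 (p : ℕ) (hp : 0 < p) :
    ∑ i ∈ Finset.Icc 1 (p - 1), ∑ m ∈ Finset.range (p + 1),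
        (-1 : ℤ) ^ i * (p.choose i : ℤ) * ((p + 2).choose (m + 1) : ℤ)
          * (p.choose m : ℤ) * (i : ℤ) ^ (p - m) * ((i : ℤ) - (p : ℤ)) ^ m
      = 2 * (-1 : ℤ) ^ p *
          (((2 * p + 1).factorial / (p + 1).factorial : ℕ) - (p + 2) * (p : ℤ) ^ p) := by
  set g : ℕ → ℤ := fun i => ∑ m ∈ Finset.range (p + 1),
      (-1 : ℤ) ^ i * (p.choose i : ℤ) * ((p + 2).choose (m + 1) : ℤ)
        * (p.choose m : ℤ) * (i : ℤ) ^ (p - m) * ((i : ℤ) - (p : ℤ)) ^ m with hg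
  -- full sum
  have hF : ∑ i ∈ range (p + 1), g i
      = (-1 : ℤ) ^ p * (p.factorial : ℤ) * ((2 * p + 2).choose (p + 1) : ℤ) := by
    rw [hg, Finset.sum_comm]
    have step : ∀ m ∈ range (p + 1),
        (∑ i ∈ range (p + 1), (-1 : ℤ) ^ i * (p.choose i : ℤ) * ((p + 2).choose (m + 1) : ℤ)
          * (p.choose m : ℤ) * (i : ℤ) ^ (p - m) * ((i : ℤ) - (p : ℤ)) ^ m)
        = ((p + 2).choose (m + 1) : ℤ) * (p.choose m : ℤ) * ((-1 : ℤ) ^ p * (p.factorial : ℤ)) := by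
      intro m hm
      simp only [Finset.mem_range] at hm
      rw [← Spow_mixed p (p - m) m (by omega), Finset.mul_sum]
      apply Finset.sum_congr rfl
      intro i _
      ring
    rw [Finset.sum_congr rfl step, ← Finset.sum_mul, ← vander p]
    push_cast
    ring
  -- decomposition of range (p+1)
  have hdec : Finset.range (p + 1) = insert 0 (insert p (Finset.Icc 1 (p - 1))) := by
    ext i
    simp only [Finset.mem_range, Finset.mem_insert, Finset.mem_Icc]
    omega
  have h0notin : (0 : ℕ) ∉ insert p (Finset.Icc 1 (p - 1)) := by
    simp only [Finset.mem_insert, Finset.mem_Icc]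
    omega
  have hpnotin : p ∉ Finset.Icc 1 (p - 1) := by
    simp only [Finset.mem_Icc]; omega
  have hsplit : ∑ i ∈ range (p + 1), g i = g 0 + g p + ∑ i ∈ Finset.Icc 1 (p - 1), g i := by
    rw [hdec, Finset.sum_insert h0notin, Finset.sum_insert hpnotin]; ring
  -- g 0
  have hg0 : g 0 = ((p : ℤ) + 2) * (-1 : ℤ) ^ p * (p : ℤ) ^ p := by
    rw [hg]
    beta_reduce
    rw [Finset.sum_eq_single p]
    · rw [Nat.sub_self]
      simp only [pow_zero, Nat.cast_zero, one_mul, Nat.choose_self, Nat.cast_one, mul_one,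
        Nat.choose_zero_right, zero_sub]
      rw [show p + 2 = (p + 1) + 1 by omega, Nat.choose_succ_self_right]
      rw [neg_pow]
      push_cast
      ring
    · intro m hm hne
      simp only [Finset.mem_range] at hm
      rw [Nat.cast_zero, zero_pow (show p - m ≠ 0 by omega)]
      ring
    · intro h; simp at h
  -- g p
  have hgp : g p = (-1 : ℤ) ^ p * ((p : ℤ) + 2) * (p : ℤ) ^ p := by
    rw [hg]
    beta_reduce
    rw [Finset.sum_eq_single 0]
    · simp only [sub_self, pow_zero, mul_one, Nat.choose_self, Nat.cast_one,
        Nat.choose_zero_right, Nat.sub_zero, Nat.choose_one_right]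
      push_cast [Nat.choose_one_right]
      ring
    · intro m hm hne
      rw [sub_self, zero_pow hne, mul_zero]
    · intro h; simp at h
  have hfact := fact_arith p
  have hfact' : (p.factorial : ℤ) * ((2 * p + 2).choose (p + 1) : ℤ)
      = 2 * (((2 * p + 1).factorial / (p + 1).factorial : ℕ) : ℤ) := by
    exact_mod_cast congrArg (Nat.cast : ℕ → ℤ) hfact
  have key : ∑ i ∈ Finset.Icc 1 (p - 1), g i
      = (-1 : ℤ) ^ p * (p.factorial : ℤ) * ((2 * p + 2).choose (p + 1) : ℤ) - g 0 - g p := by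
    rw [← hF, hsplit]; ring
  have key2 : ∑ i ∈ Finset.Icc 1 (p - 1), g i
      = 2 * (-1 : ℤ) ^ p *
          (((2 * p + 1).factorial / (p + 1).factorial : ℕ) - (p + 2) * (p : ℤ) ^ p) := by
    rw [key, hg0, hgp]
    linear_combination ((-1:ℤ)^p) * hfact'
  exact key2
end

section
/- Let D_0 be a symmetric positive definite (p-1)×(p-1) real matrix and M_1 a symmetric positive definite p×p real matrix. Let D_1 be the p×p block matrix with a zero in the (1,1) position, zero first row and column, and D_0 in the lower-right block. Define D̂ = D_1 ⊗ M_1 + M_1 ⊗ D_1 (Kronecker products), a p²×p² matrix. Then the (1,1) cofactor of D̂ is nonzero, i.e., the submatrix obtained by deleting the first row and first column of D̂ is invertible. -/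
open Matrix Kronecker

lemma kron_psd {m k : Type*} [Fintype m] [Fintype k]
    {A : Matrix m m ℝ} {B : Matrix k k ℝ} (hA : A.PosSemidef) (hB : B.PosSemidef) :
    (A ⊗ₖ B).PosSemidef := by
  exact hA.kronecker hB

theorem stmt_8 (n : ℕ)
    (D0 : Matrix (Fin n) (Fin n) ℝ) (hD0 : D0.PosDef)
    (M1 : Matrix (Fin (n + 1)) (Fin (n + 1)) ℝ) (hM1 : M1.PosDef)
    (D1 : Matrix (Fin (n + 1)) (Fin (n + 1)) ℝ)
    (hD1 : D1 = Matrix.of fun i j : Fin (n + 1) =>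
      if hi : i = 0 then 0 else if hj : j = 0 then 0 else D0 (i.pred hi) (j.pred hj))
    (Dhat : Matrix (Fin (n + 1) × Fin (n + 1)) (Fin (n + 1) × Fin (n + 1)) ℝ)
    (hDhat : Dhat = D1 ⊗ₖ M1 + M1 ⊗ₖ D1) :
    (Matrix.of fun a b : {q : Fin (n + 1) × Fin (n + 1) // q ≠ (0, 0)} =>
        Dhat a.val b.val).det ≠ 0 := by
  -- basic structural facts about D1
  have hrow0 : ∀ j, D1 0 j = 0 := by intro j; simp [hD1]
  have hcol0 : ∀ i, D1 i 0 = 0 := by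
    intro i; by_cases hi : i = 0 <;> simp [hD1, hi]
  have hsub : ∀ i j : Fin n, D1 i.succ j.succ = D0 i j := by
    intro i j; simp [hD1, Fin.succ_ne_zero]
  -- D1 is Hermitian
  have hsym0 : ∀ a b, D0 a b = D0 b a := by
    intro a b
    have := hD0.isHermitian.apply b a
    simpa using this
  have hD1sym : D1.IsHermitian := by
    subst hD1
    ext i j
    by_cases hi : i = 0 <;> by_cases hj : j = 0 <;>
      simp [Matrix.conjTranspose_apply, hi, hj, hsym0]
  -- M1 kernel trivial
  have hM1ker : ∀ v : Fin (n + 1) → ℝ, M1 *ᵥ v = 0 → v = 0 := by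
    intro v hv
    by_contra hne
    have := hM1.dotProduct_mulVec_pos hne
    rw [hv, dotProduct_zero] at this
    exact lt_irrefl 0 this
  -- D0 kernel trivial
  have hD0ker : ∀ v : Fin n → ℝ, D0 *ᵥ v = 0 → v = 0 := by
    intro v hv
    by_contra hne
    have := hD0.dotProduct_mulVec_pos hne
    rw [hv, dotProduct_zero] at this
    exact lt_irrefl 0 this
  -- D1 kernel
  have hkerD1 : ∀ v : Fin (n + 1) → ℝ, D1 *ᵥ v = 0 → ∀ i, i ≠ 0 → v i = 0 := by
    intro v hv i hi
    have hw : D0 *ᵥ (fun k => v k.succ) = 0 := by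
      ext a
      have := congrFun hv a.succ
      simpa [mulVec, dotProduct, Fin.sum_univ_succ, hcol0, hsub] using this
    have := congrFun (hD0ker _ hw) (i.pred hi)
    simpa [Fin.succ_pred] using this
  -- D1 PSD
  have hD1psd : D1.PosSemidef := by
    refine .of_dotProduct_mulVec_nonneg hD1sym fun v => ?_
    have : star v ⬝ᵥ D1 *ᵥ v
        = star (fun k => v (Fin.succ k)) ⬝ᵥ D0 *ᵥ (fun k => v (Fin.succ k)) := by
      simp [dotProduct, mulVec, Fin.sum_univ_succ, hrow0, hcol0, hsub]
    rw [this]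
    exact hD0.posSemidef.dotProduct_mulVec_nonneg _
  -- main argument
  intro hdet
  obtain ⟨x, hx0, hx⟩ := Matrix.exists_mulVec_eq_zero_iff.mpr hdet
  set y : Fin (n + 1) × Fin (n + 1) → ℝ :=
    fun q => if h : q = (0, 0) then 0 else x ⟨q, h⟩ with hy
  have hy00 : y (0, 0) = 0 := by simp [hy]
  have hyval : ∀ b : {q : Fin (n + 1) × Fin (n + 1) // q ≠ (0, 0)}, y b.val = x b := by
    intro b; exact dif_neg b.prop
  -- sums over the full index set vs the subtype
  have sumext : ∀ g : Fin (n + 1) × Fin (n + 1) → ℝ,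
      ∑ p, g p * y p = ∑ b : {q : Fin (n + 1) × Fin (n + 1) // q ≠ (0, 0)}, g b.val * x b := by
    intro g
    rw [← Finset.sum_erase_add _ _ (Finset.mem_univ ((0, 0) : Fin (n + 1) × Fin (n + 1)))]
    rw [hy00, mul_zero, add_zero]
    rw [Finset.sum_subtype (Finset.univ.erase (0,0))
      (p := fun q : Fin (n + 1) × Fin (n + 1) => q ≠ (0, 0))
      (fun q => by simp) (fun q => g q * y q)]
    exact Finset.sum_congr rfl fun b _ => by rw [hyval]
  -- Dhat *ᵥ y = 0
  have hDy : Dhat *ᵥ y = 0 := by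
    ext q
    by_cases hq : q = (0, 0)
    · subst hq
      simp [mulVec, dotProduct, hDhat, Matrix.add_apply, hrow0, kroneckerMap_apply,
        Fintype.sum_prod_type]
    · have := congrFun hx ⟨q, hq⟩
      simp only [mulVec, dotProduct, Matrix.of_apply, Pi.zero_apply] at this ⊢
      rw [sumext fun p => Dhat q p]
      exact this
  -- split into the two PSD pieces
  have psdA : (D1 ⊗ₖ M1).PosSemidef := kron_psd hD1psd hM1.posSemidef
  have psdB : (M1 ⊗ₖ D1).PosSemidef := kron_psd hM1.posSemidef hD1psd
  have hq0 : star y ⬝ᵥ (D1 ⊗ₖ M1) *ᵥ y + star y ⬝ᵥ (M1 ⊗ₖ D1) *ᵥ y = 0 := by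
    have : star y ⬝ᵥ Dhat *ᵥ y = 0 := by rw [hDy, dotProduct_zero]
    rw [← this, hDhat, add_mulVec, dotProduct_add]
  have hA0 : (D1 ⊗ₖ M1) *ᵥ y = 0 := by
    rw [← psdA.dotProduct_mulVec_zero_iff]
    have h1 := psdA.dotProduct_mulVec_nonneg y
    have h2 := psdB.dotProduct_mulVec_nonneg y
    linarith
  have hB0 : (M1 ⊗ₖ D1) *ᵥ y = 0 := by
    rw [← psdB.dotProduct_mulVec_zero_iff]
    have h1 := psdA.dotProduct_mulVec_nonneg y
    have h2 := psdB.dotProduct_mulVec_nonneg y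
    linarith
  -- from hA0 : rows with first coordinate ≠ 0 vanish
  have hk : ∀ k l, k ≠ 0 → y (k, l) = 0 := by
    intro k l hk
    have hz : ∀ j : Fin (n + 1), D1 *ᵥ (fun a => ∑ b, M1 j b * y (a, b)) = 0 := by
      intro j
      ext i
      have := congrFun hA0 (i, j)
      simp only [mulVec, dotProduct, Fintype.sum_prod_type, kroneckerMap_apply,
        Pi.zero_apply] at this ⊢
      rw [← this]
      congr 1; ext a
      rw [Finset.mul_sum]
      congr 1; ext b
      ring
    have hMy : M1 *ᵥ (fun b => y (k, b)) = 0 := by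
      ext j
      have := congrFun (hz j) k
      have h2 := hkerD1 _ (hz j) k hk
      simpa [mulVec, dotProduct] using h2
    exact congrFun (hM1ker _ hMy) l
  -- from hB0 : columns with second coordinate ≠ 0 vanish
  have hl : ∀ k l, l ≠ 0 → y (k, l) = 0 := by
    intro k l hl
    have hz : ∀ i : Fin (n + 1), D1 *ᵥ (fun b => ∑ a, M1 i a * y (a, b)) = 0 := by
      intro i
      ext j
      have := congrFun hB0 (i, j)
      simp only [mulVec, dotProduct, Fintype.sum_prod_type, kroneckerMap_apply,
        Pi.zero_apply] at this ⊢
      rw [← this]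
      rw [Finset.sum_comm]
      congr 1; ext b
      rw [Finset.mul_sum]
      congr 1; ext a
      ring
    have hMy : M1 *ᵥ (fun a => y (a, l)) = 0 := by
      ext i
      have h2 := hkerD1 _ (hz i) l hl
      simpa [mulVec, dotProduct] using h2
    exact congrFun (hM1ker _ hMy) k
  -- conclude y = 0, hence x = 0, contradiction
  have hyzero : y = 0 := by
    ext ⟨k, l⟩
    by_cases hk0 : k = 0
    · by_cases hl0 : l = 0
      · subst hk0; subst hl0; simpa using hy00
      · exact hl k l hl0
    · exact hk k l hk0
  apply hx0
  ext b
  rw [← hyval b, hyzero]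
  rfl
end

section
/- Let D_1, M_1, D̂ be as follows: D_0 symmetric positive definite of size (p-1), M_1 symmetric positive definite of size p, D_1 the p×p matrix with D_0 as lower-right block and zeros elsewhere, and D̂ = D_1 ⊗ M_1 + M_1 ⊗ D_1. Then D̂ is symmetric positive semidefinite with kernel of dimension exactly 1. -/
open Matrix Kronecker

lemma kron_posSemidef {m p : Type*} [Fintype m] [Fintype p] [DecidableEq m] [DecidableEq p]
    {A : Matrix m m ℝ} {B : Matrix p p ℝ} (hA : A.PosSemidef) (hB : B.PosSemidef) :
    (A ⊗ₖ B).PosSemidef := by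
  exact hA.kronecker hB

lemma psd_add {m : Type*} [Fintype m] {A B : Matrix m m ℝ}
    (hA : A.PosSemidef) (hB : B.PosSemidef) : (A + B).PosSemidef := by
  refine ⟨hA.1.add hB.1, fun x => ?_⟩
  have := add_nonneg (hA.2 x) (hB.2 x)
  convert this using 1
  simp [Finsupp.sum, mul_add, add_mul, Finset.sum_add_distrib]

theorem stmt_9 (n : ℕ)
    (D0 : Matrix (Fin n) (Fin n) ℝ) (hD0 : D0.PosDef)
    (M1 : Matrix (Fin (n + 1)) (Fin (n + 1)) ℝ) (hM1 : M1.PosDef)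
    (D1 : Matrix (Fin (n + 1)) (Fin (n + 1)) ℝ)
    (hD1 : D1 = Matrix.of fun i j : Fin (n + 1) =>
      if hi : i = 0 then 0 else if hj : j = 0 then 0 else D0 (i.pred hi) (j.pred hj))
    (Dhat : Matrix (Fin (n + 1) × Fin (n + 1)) (Fin (n + 1) × Fin (n + 1)) ℝ)
    (hDhat : Dhat = D1 ⊗ₖ M1 + M1 ⊗ₖ D1) :
    Dhat.PosSemidef ∧
      Module.finrank ℝ (LinearMap.ker (Matrix.toLin' Dhat)) = 1 := by
  -- basic entry facts about D1
  have h0 : ∀ j, D1 0 j = 0 := by intro j; rw [hD1]; simp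
  have hc0 : ∀ i, D1 i 0 = 0 := by
    intro i; rw [hD1]; dsimp only [Matrix.of_apply]
    split_ifs with h1 h2
    · rfl
    · rfl
    · exact absurd rfl h2
  have hs : ∀ (i j : Fin n), D1 i.succ j.succ = D0 i j := by
    intro i j; rw [hD1]; dsimp only [Matrix.of_apply]
    rw [dif_neg (Fin.succ_ne_zero i), dif_neg (Fin.succ_ne_zero j)]
    simp
  have hsym : ∀ a b, D0 a b = D0 b a := by
    intro a b
    conv_lhs => rw [← hD0.1]
    simp [conjTranspose_apply]
  -- kernels
  have kerD0 : ∀ w : Fin n → ℝ, D0 *ᵥ w = 0 → w = 0 := by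
    intro w hw
    by_contra hne
    have := hD0.dotProduct_mulVec_pos hne
    rw [hw] at this
    simp at this
  have kerM1 : ∀ v : Fin (n + 1) → ℝ, M1 *ᵥ v = 0 → v = 0 := by
    intro v hv
    by_contra hne
    have := hM1.dotProduct_mulVec_pos hne
    rw [hv] at this
    simp at this
  have kerD1 : ∀ v : Fin (n + 1) → ℝ, D1 *ᵥ v = 0 → ∀ l, l ≠ 0 → v l = 0 := by
    intro v hv l hl
    have hD0v : D0 *ᵥ (fun k => v k.succ) = 0 := by
      funext i
      have h1 := congrFun hv i.succ
      simp only [mulVec, dotProduct, Pi.zero_apply] at h1 ⊢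
      rw [Fin.sum_univ_succ, hc0, zero_mul, zero_add] at h1
      rw [← h1]
      exact Finset.sum_congr rfl fun j _ => by rw [hs]
    have h2 := kerD0 _ hD0v
    have h3 : v (l.pred hl).succ = 0 := congrFun h2 (l.pred hl)
    rwa [Fin.succ_pred] at h3
  -- D1 is positive semidefinite
  have hD1psd : D1.PosSemidef := by
    refine .of_dotProduct_mulVec_nonneg ?_ ?_
    · ext i j
      rw [conjTranspose_apply, hD1]
      dsimp only [Matrix.of_apply]
      split_ifs <;> first | rfl | exact hsym _ _
    · intro x
      have key : star x ⬝ᵥ D1 *ᵥ x =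
          star (fun i : Fin n => x i.succ) ⬝ᵥ D0 *ᵥ (fun i : Fin n => x i.succ) := by
        simp only [star_trivial, dotProduct, mulVec]
        rw [Fin.sum_univ_succ]
        simp only [h0, zero_mul, Finset.sum_const_zero, mul_zero, zero_add]
        refine Finset.sum_congr rfl fun i _ => ?_
        congr 1
        rw [Fin.sum_univ_succ, hc0, zero_mul, zero_add]
        exact Finset.sum_congr rfl fun j _ => by rw [hs]
      rw [key]
      exact hD0.posSemidef.dotProduct_mulVec_nonneg _
  have psd1 : (D1 ⊗ₖ M1).PosSemidef := kron_posSemidef hD1psd hM1.posSemidef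
  have psd2 : (M1 ⊗ₖ D1).PosSemidef := kron_posSemidef hM1.posSemidef hD1psd
  have hpsd : Dhat.PosSemidef := by rw [hDhat]; exact psd_add psd1 psd2
  refine ⟨hpsd, ?_⟩
  -- the kernel vector
  set e : Fin (n + 1) × Fin (n + 1) → ℝ := fun p => if p = (0, 0) then 1 else 0 with he
  have he0 : e ≠ 0 := by
    intro h
    have := congrFun h (0, 0)
    simp [he] at this
  have hker : LinearMap.ker (Matrix.toLin' Dhat) = Submodule.span ℝ {e} := by
    apply le_antisymm
    · intro x hx
      rw [LinearMap.mem_ker, Matrix.toLin'_apply] at hx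
      -- both quadratic forms vanish
      have hq : x ⬝ᵥ (D1 ⊗ₖ M1) *ᵥ x + x ⬝ᵥ (M1 ⊗ₖ D1) *ᵥ x = 0 := by
        have h := congrArg (fun v => x ⬝ᵥ v) hx
        rw [hDhat] at h
        simpa [add_mulVec, dotProduct_add] using h
      have hnn1 : 0 ≤ x ⬝ᵥ (D1 ⊗ₖ M1) *ᵥ x := by simpa using psd1.dotProduct_mulVec_nonneg x
      have hnn2 : 0 ≤ x ⬝ᵥ (M1 ⊗ₖ D1) *ᵥ x := by simpa using psd2.dotProduct_mulVec_nonneg x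
      have hz1 : x ⬝ᵥ (D1 ⊗ₖ M1) *ᵥ x = 0 := by linarith
      have hz2 : x ⬝ᵥ (M1 ⊗ₖ D1) *ᵥ x = 0 := by linarith
      have k1 : (D1 ⊗ₖ M1) *ᵥ x = 0 :=
        (psd1.dotProduct_mulVec_zero_iff x).mp (by simpa using hz1)
      have k2 : (M1 ⊗ₖ D1) *ᵥ x = 0 :=
        (psd2.dotProduct_mulVec_zero_iff x).mp (by simpa using hz2)
      -- x (k, l) = 0 for k ≠ 0
      have hx1 : ∀ k, k ≠ 0 → ∀ l, x (k, l) = 0 := by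
        intro k hk
        have A1 : ∀ j, (∑ l, M1 j l * x (k, l)) = 0 := by
          intro j
          have hv : D1 *ᵥ (fun k' => ∑ l, M1 j l * x (k', l)) = 0 := by
            funext i
            have h := congrFun k1 (i, j)
            simp only [mulVec, dotProduct, Pi.zero_apply, kroneckerMap_apply] at h ⊢
            rw [Fintype.sum_prod_type] at h
            rw [← h]
            refine Finset.sum_congr rfl fun k' _ => ?_
            rw [Finset.mul_sum]
            exact Finset.sum_congr rfl fun l _ => by ring
          exact kerD1 _ hv k hk
        have hMv : M1 *ᵥ (fun l => x (k, l)) = 0 := by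
          funext j
          simpa [mulVec, dotProduct] using A1 j
        intro l
        exact congrFun (kerM1 _ hMv) l
      -- x (k, l) = 0 for l ≠ 0
      have hx2 : ∀ k l, l ≠ 0 → x (k, l) = 0 := by
        intro k l hl
        have A2 : ∀ j, (∑ l', D1 j l' * x (k, l')) = 0 := by
          intro j
          have hv : M1 *ᵥ (fun k' => ∑ l', D1 j l' * x (k', l')) = 0 := by
            funext i
            have h := congrFun k2 (i, j)
            simp only [mulVec, dotProduct, Pi.zero_apply, kroneckerMap_apply] at h ⊢
            rw [Fintype.sum_prod_type] at h
            rw [← h]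
            refine Finset.sum_congr rfl fun k' _ => ?_
            rw [Finset.mul_sum]
            exact Finset.sum_congr rfl fun l' _ => by ring
          exact congrFun (kerM1 _ hv) k
        have hDv : D1 *ᵥ (fun l' => x (k, l')) = 0 := by
          funext j
          simpa [mulVec, dotProduct] using A2 j
        exact kerD1 _ hDv l hl
      rw [Submodule.mem_span_singleton]
      refine ⟨x (0, 0), ?_⟩
      funext ⟨k, l⟩
      by_cases hk : k = 0
      · by_cases hl : l = 0
        · subst hk; subst hl; simp [he]
        · subst hk
          simp only [Pi.smul_apply, he, smul_eq_mul]
          rw [hx2 0 l hl, if_neg (by simp [Prod.ext_iff, hl]), mul_zero]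
      · simp only [Pi.smul_apply, he, smul_eq_mul]
        rw [hx1 k hk l, if_neg (by simp [Prod.ext_iff, hk]), mul_zero]
    · rw [Submodule.span_singleton_le_iff_mem, LinearMap.mem_ker, Matrix.toLin'_apply]
      funext ⟨i, j⟩
      rw [hDhat]
      simp only [mulVec, dotProduct, he, mul_ite, mul_one, mul_zero, Pi.zero_apply]
      rw [Finset.sum_ite_eq' Finset.univ ((0 : Fin (n + 1)), (0 : Fin (n + 1)))]
      simp [hc0]
  rw [hker]
  exact finrank_span_singleton he0
end

section
/- Let F: [0,b_1]×[0,b_2] → ℝ be twice continuously differentiable in its first variable near (0,0), with F(s,s) = δ_0 s^{σ_1} + o(s^{σ_1}), ∂₁F(s,s) = δ_1 s^{σ_2} + o(s^{σ_2}) as s → 0⁺, σ_1 > 2σ_2 > 0, δ_1 > 0. Then for all sufficiently small s > 0 one has F(s + s^{σ_1/2}, s) > 0 and F(s - s^{σ_1/2}, s) < 0, and hence by the intermediate value theorem there exists s_h with |s_h - s| < s^{σ_1/2} and F(s_h, s) = 0. -/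
open Asymptotics Filter Real Set Topology

set_option maxHeartbeats 1000000 in
theorem stmt_11 (b1 b2 : ℝ) (hb1 : 0 < b1) (hb2 : 0 < b2)
    (F F1 F2 : ℝ → ℝ → ℝ) (δ0 δ1 σ1 σ2 : ℝ)
    (hσ : 2 * σ2 < σ1) (hσ2 : 0 < σ2) (hδ1 : 0 < δ1)
    (hd1 : ∀ x s : ℝ, HasDerivAt (fun y => F y s) (F1 x s) x)
    (hd2 : ∀ x s : ℝ, HasDerivAt (fun y => F1 y s) (F2 x s) x)
    (hF2cont : ContinuousAt (fun q : ℝ × ℝ => F2 q.1 q.2) (0, 0))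
    (hF : (fun s => F s s - δ0 * s ^ σ1) =o[𝓝[>] (0 : ℝ)] fun s => s ^ σ1)
    (hF1 : (fun s => F1 s s - δ1 * s ^ σ2) =o[𝓝[>] (0 : ℝ)] fun s => s ^ σ2) :
    ∀ᶠ s in 𝓝[>] (0 : ℝ),
      0 < F (s + s ^ (σ1 / 2)) s ∧ F (s - s ^ (σ1 / 2)) s < 0 ∧
        ∃ sh : ℝ, |sh - s| < s ^ (σ1 / 2) ∧ F sh s = 0 := by
  obtain ⟨ε, hε, hMb⟩ : ∃ ε > 0, ∀ x t : ℝ, |x| < ε → |t| < ε → |F2 x t| < |F2 0 0| + 1 := by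
    have h : ∀ᶠ q : ℝ × ℝ in 𝓝 (0, 0), |F2 q.1 q.2| < |F2 0 0| + 1 :=
      Filter.Tendsto.eventually_lt_const (lt_add_one _) hF2cont.abs
    rw [Metric.eventually_nhds_iff] at h
    obtain ⟨ε, hε, h⟩ := h
    refine ⟨ε, hε, fun x t hx ht => h (show dist ((x, t) : ℝ × ℝ) (0, 0) < ε from ?_)⟩
    rw [Prod.dist_eq]
    simp only [Real.dist_eq, sub_zero, max_lt_iff]
    exact ⟨hx, ht⟩
  set M : ℝ := |F2 0 0| + 1 with hMdef
  have hM : 0 < M := by positivity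
  have hσ1 : 0 < σ1 := by linarith
  have hhalf : 0 < σ1 / 2 := by linarith
  have hdiffpos : 0 < σ1 / 2 - σ2 := by linarith
  have hrpow : ∀ a : ℝ, 0 < a → Tendsto (fun s : ℝ => s ^ a) (𝓝[>] (0:ℝ)) (𝓝 0) := by
    intro a ha
    have h := (Real.continuousAt_rpow_const 0 a (Or.inr ha.le)).tendsto
    rw [Real.zero_rpow (ne_of_gt ha)] at h
    exact h.mono_left nhdsWithin_le_nhds
  have E1 := hF.def one_pos
  have E2 := hF1.def (half_pos hδ1)
  have E3 : ∀ᶠ s : ℝ in 𝓝[>] 0, s < ε / 2 :=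
    eventually_nhdsWithin_of_eventually_nhds (eventually_lt_nhds (by positivity))
  have E4 : ∀ᶠ s : ℝ in 𝓝[>] 0, s ^ (σ1 / 2) < ε / 2 :=
    (hrpow _ hhalf).eventually (eventually_lt_nhds (by positivity))
  have E5 : ∀ᶠ s : ℝ in 𝓝[>] 0, s ^ (σ1 / 2 - σ2) < δ1 / (4 * (M + |δ0| + 1)) :=
    (hrpow _ hdiffpos).eventually (eventually_lt_nhds (by positivity))
  filter_upwards [self_mem_nhdsWithin, E1, E2, E3, E4, E5] with s hs hE1 hE2 hE3 hE4 hE5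
  simp only [mem_Ioi] at hs
  set h := s ^ (σ1 / 2) with hhdef
  have hh : 0 < h := Real.rpow_pos_of_pos hs _
  have hs1 : 0 < s ^ σ1 := Real.rpow_pos_of_pos hs _
  have hs2 : 0 < s ^ σ2 := Real.rpow_pos_of_pos hs _
  have hhs : h * h = s ^ σ1 := by
    rw [hhdef, ← Real.rpow_add hs, add_halves]
  have hprod : s ^ (σ1 / 2 - σ2) * (s ^ σ2 * h) = s ^ σ1 := by
    rw [hhdef, ← Real.rpow_add hs, ← Real.rpow_add hs]
    congr 1; ring
  -- bound F2 on the interval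
  have hF2bound : ∀ y ∈ Icc (s - h) (s + h), |F2 y s| ≤ M := by
    intro y hy
    have hy1 := hy.1
    have hy2 := hy.2
    refine le_of_lt (hMb y s ?_ ?_)
    · rw [abs_lt]; constructor <;> linarith
    · rw [abs_lt]; constructor <;> linarith
  have hsmem : s ∈ Icc (s - h) (s + h) := ⟨by linarith, by linarith⟩
  have keyA : ∀ y ∈ Icc (s - h) (s + h), ‖F1 y s - F1 s s‖ ≤ M * h := by
    intro y hy
    have hb := (convex_Icc (s - h) (s + h)).norm_image_sub_le_of_norm_hasDerivWithin_le
      (f' := fun x => F2 x s)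
      (fun x _ => (hd2 x s).hasDerivWithinAt)
      (fun x hx => by rw [Real.norm_eq_abs]; exact hF2bound x hx)
      hsmem hy
    have hys : ‖y - s‖ ≤ h := by
      rw [Real.norm_eq_abs, abs_sub_le_iff]
      exact ⟨by linarith [hy.2], by linarith [hy.1]⟩
    calc ‖F1 y s - F1 s s‖ ≤ M * ‖y - s‖ := hb
      _ ≤ M * h := by nlinarith
  have keyB : ∀ y ∈ Icc (s - h) (s + h),
      ‖(F y s - F1 s s * y) - (F s s - F1 s s * s)‖ ≤ M * h * ‖y - s‖ := by
    intro y hy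
    exact (convex_Icc (s - h) (s + h)).norm_image_sub_le_of_norm_hasDerivWithin_le
      (f' := fun x => F1 x s - F1 s s)
      (fun x _ => by
        have : HasDerivAt (fun y => F y s - F1 s s * y) (F1 x s - F1 s s) x := by
          have h2 := (hd1 x s).sub (((hasDerivAt_id x).const_mul (F1 s s)))
          simp only [mul_one] at h2
          exact h2
        exact this.hasDerivWithinAt)
      (fun x hx => keyA x hx)
      hsmem hy
  have hp' : |F (s + h) s - F s s - F1 s s * h| ≤ M * (h * h) := by
    have hb := keyB (s + h) ⟨by linarith, le_refl _⟩
    rw [Real.norm_eq_abs, Real.norm_eq_abs] at hb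
    calc |F (s + h) s - F s s - F1 s s * h|
        = |(F (s + h) s - F1 s s * (s + h)) - (F s s - F1 s s * s)| := by congr 1; ring
      _ ≤ M * h * |s + h - s| := hb
      _ = M * (h * h) := by rw [show s + h - s = h by ring, abs_of_pos hh]; ring
  have hm' : |F (s - h) s - F s s + F1 s s * h| ≤ M * (h * h) := by
    have hb := keyB (s - h) ⟨le_refl _, by linarith⟩
    rw [Real.norm_eq_abs, Real.norm_eq_abs] at hb
    calc |F (s - h) s - F s s + F1 s s * h|
        = |(F (s - h) s - F1 s s * (s - h)) - (F s s - F1 s s * s)| := by congr 1; ring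
      _ ≤ M * h * |s - h - s| := hb
      _ = M * (h * h) := by rw [show s - h - s = -h by ring, abs_neg, abs_of_pos hh]; ring
  rw [Real.norm_eq_abs, Real.norm_eq_abs, abs_of_pos hs1] at hE1
  rw [Real.norm_eq_abs, Real.norm_eq_abs, abs_of_pos hs2] at hE2
  obtain ⟨e1l, e1u⟩ := abs_le.mp hE1
  obtain ⟨e2l, e2u⟩ := abs_le.mp hE2
  rw [hhs] at hp' hm'
  obtain ⟨rpl, rpu⟩ := abs_le.mp hp'
  obtain ⟨rml, rmu⟩ := abs_le.mp hm'
  have hA : 0 < s ^ σ2 * h := by positivity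
  have hMtot : 0 < M + |δ0| + 1 := by positivity
  have hkey : (M + |δ0| + 1) * s ^ σ1 < δ1 / 4 * (s ^ σ2 * h) := by
    rw [← hprod]
    calc (M + |δ0| + 1) * (s ^ (σ1 / 2 - σ2) * (s ^ σ2 * h))
        < (M + |δ0| + 1) * (δ1 / (4 * (M + |δ0| + 1)) * (s ^ σ2 * h)) := by
          exact mul_lt_mul_of_pos_left (mul_lt_mul_of_pos_right hE5 hA) hMtot
      _ = δ1 / 4 * (s ^ σ2 * h) := by field_simp
  have hd0u : δ0 * s ^ σ1 ≤ |δ0| * s ^ σ1 :=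
    mul_le_mul_of_nonneg_right (le_abs_self _) hs1.le
  have hd0l : -(|δ0| * s ^ σ1) ≤ δ0 * s ^ σ1 := by
    nlinarith [neg_abs_le δ0]
  have he2hu := mul_le_mul_of_nonneg_right e2u hh.le
  have he2hl := mul_le_mul_of_nonneg_right e2l hh.le
  clear_value M h
  have expand1 : F (s + h) s = (F (s + h) s - F s s - F1 s s * h) + (F s s - δ0 * s ^ σ1)
      + δ0 * s ^ σ1 + (F1 s s - δ1 * s ^ σ2) * h + δ1 * (s ^ σ2 * h) := by ring
  have expand2 : F (s - h) s = (F (s - h) s - F s s + F1 s s * h) + (F s s - δ0 * s ^ σ1)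
      + δ0 * s ^ σ1 - (F1 s s - δ1 * s ^ σ2) * h - δ1 * (s ^ σ2 * h) := by ring
  have hpos : 0 < F (s + h) s := by
    rw [expand1]; linarith only [rpl, e1l, hd0l, he2hl, hkey, hA, mul_pos hδ1 hA]
  have hneg : F (s - h) s < 0 := by
    rw [expand2]; linarith only [rmu, e1u, hd0u, he2hl, hkey, hA, mul_pos hδ1 hA]
  have hcont : ContinuousOn (fun y => F y s) (Icc (s - h) (s + h)) :=
    (continuous_iff_continuousAt.mpr fun y => (hd1 y s).continuousAt).continuousOn
  obtain ⟨sh, hshmem, hsh0⟩ :=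
    intermediate_value_Ioo (by linarith : s - h ≤ s + h) hcont ⟨hneg, hpos⟩
  refine ⟨hpos, hneg, sh, ?_, hsh0⟩
  rw [abs_sub_lt_iff]
  exact ⟨by linarith [hshmem.2], by linarith [hshmem.1]⟩
end

section
/- For the Legendre polynomial L_n(s) = (1/(2^n n!)) d^n/ds^n (s²-1)^n, its d-th derivative satisfies L_n^{(d)}(s) = (n!/(2^n (n-d)!)) Σ_{m=0}^{n-d} binom(n+d, m+d) * binom(n-d, m) * (s+1)^{n-m-d} * (s-1)^m, for all 0 ≤ d ≤ n. -/
open Polynomial Finset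

private lemma iteratedDeriv_polyEval (P : Polynomial ℝ) :
    ∀ k : ℕ, iteratedDeriv k (fun x : ℝ => P.eval x) =
      fun x : ℝ => (derivative^[k] P).eval x := by
  intro k
  induction k with
  | zero => simp
  | succ k ih =>
    rw [iteratedDeriv_succ, ih, Function.iterate_succ_apply']
    funext x
    exact Polynomial.deriv _

private lemma cast_descFactorial_real {n k : ℕ} (h : k ≤ n) :
    ((n.descFactorial k : ℕ) : ℝ) = (n.factorial : ℝ) / ((n - k).factorial : ℝ) := by
  rw [eq_div_iff (by exact_mod_cast (n - k).factorial_ne_zero)]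
  exact_mod_cast congrArg (Nat.cast (R := ℝ)) ((mul_comm _ _).trans
    (Nat.factorial_mul_descFactorial h))

theorem stmt_13 (n d : ℕ) (hd : d ≤ n)
    (L : ℝ → ℝ)
    (hL : ∀ s : ℝ, L s =
      (1 / (2 ^ n * (n.factorial : ℝ))) * iteratedDeriv n (fun x : ℝ => (x ^ 2 - 1) ^ n) s) :
    ∀ s : ℝ, iteratedDeriv d L s =
      ((n.factorial : ℝ) / (2 ^ n * ((n - d).factorial : ℝ))) *
        ∑ m ∈ Finset.range (n - d + 1),
          ((n + d).choose (m + d) : ℝ) * ((n - d).choose m : ℝ) *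
            (s + 1) ^ (n - m - d) * (s - 1) ^ m := by
  intro s
  set c : ℝ := 1 / (2 ^ n * (n.factorial : ℝ)) with hc
  set P : Polynomial ℝ := ((X : Polynomial ℝ) ^ 2 - C 1) ^ n with hPdef
  -- rewrite L as evaluation of a polynomial
  have hfun : (fun x : ℝ => (x ^ 2 - 1) ^ n) = fun x : ℝ => P.eval x := by
    funext x; simp [hPdef]
  have hLfun : L = fun x : ℝ => (C c * derivative^[n] P).eval x := by
    funext x
    rw [hL x, hfun, iteratedDeriv_polyEval]
    simp
  -- compute the iterated derivative
  rw [hLfun, iteratedDeriv_polyEval, Polynomial.iterate_derivative_C_mul,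
    ← Function.iterate_add_apply]
  -- P = (X-1)^n * (X+1)^n
  have hPsplit : P = ((X : Polynomial ℝ) - C 1) ^ n * ((X : Polynomial ℝ) + C 1) ^ n := by
    rw [hPdef, ← mul_pow]; ring_nf; simp
  rw [hPsplit, Polynomial.iterate_derivative_mul]
  -- evaluate
  simp only [Polynomial.iterate_derivative_X_sub_pow, Polynomial.iterate_derivative_X_add_pow,
    eval_mul, eval_C, eval_finset_sum, smul_mul_assoc, eval_smul, smul_eq_mul, eval_pow,
    eval_sub, eval_add, eval_X, eval_one, eval_natCast, nsmul_eq_mul, Nat.succ_eq_add_one]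
  have hsum :
      ∑ k ∈ range (d + n + 1),
        ((d + n).choose k : ℝ) *
          ((n.descFactorial (d + n - k) : ℝ) * (s - 1) ^ (n - (d + n - k)) *
            ((n.descFactorial k : ℝ) * (s + 1) ^ (n - k)))
      = ∑ m ∈ range (n - d + 1),
        ((d + n).choose (d + m) : ℝ) *
          ((n.descFactorial (d + n - (d + m)) : ℝ) * (s - 1) ^ (n - (d + n - (d + m))) *
            ((n.descFactorial (d + m) : ℝ) * (s + 1) ^ (n - (d + m)))) := by
    have h2 : (∑ m ∈ range (n - d + 1),
        ((d + n).choose (d + m) : ℝ) *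
          ((n.descFactorial (d + n - (d + m)) : ℝ) * (s - 1) ^ (n - (d + n - (d + m))) *
            ((n.descFactorial (d + m) : ℝ) * (s + 1) ^ (n - (d + m)))))
        = ∑ k ∈ Ico d (n + 1),
        ((d + n).choose k : ℝ) *
          ((n.descFactorial (d + n - k) : ℝ) * (s - 1) ^ (n - (d + n - k)) *
            ((n.descFactorial k : ℝ) * (s + 1) ^ (n - k))) := by
      rw [Finset.sum_Ico_eq_sum_range, show n + 1 - d = n - d + 1 from by omega]
    rw [h2]
    symm
    apply Finset.sum_subset
    · intro k hk
      simp only [mem_Ico] at hk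
      simp only [mem_range]
      omega
    · intro k hk hk2
      simp only [mem_range] at hk
      simp only [mem_Ico, not_and, not_lt] at hk2
      rcases lt_or_ge k d with h | h
      · have : n < d + n - k := by omega
        rw [Nat.descFactorial_eq_zero_iff_lt.2 this]
        simp
      · have : n < k := by omega
        rw [Nat.descFactorial_eq_zero_iff_lt.2 this]
        simp
  rw [hsum, Finset.mul_sum, Finset.mul_sum]
  apply Finset.sum_congr rfl
  intro m hm
  simp only [mem_range] at hm
  -- simplify nat arithmetic in exponents and indices
  have e1 : d + n - (d + m) = n - m := by omega
  have e2 : n - (n - m) = m := by omega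
  rw [e1, e2]
  have e4 : (((d + n).choose (d + m) : ℕ) : ℝ) = (((n + d).choose (m + d) : ℕ) : ℝ) := by
    rw [Nat.add_comm d n, Nat.add_comm d m]
  rw [e4, cast_descFactorial_real (by omega : n - m ≤ n),
      cast_descFactorial_real (by omega : d + m ≤ n), e2,
      Nat.cast_choose ℝ (by omega : m ≤ n - d)]
  have e5 : n - (d + m) = n - m - d := by omega
  have e6 : n - d - m = n - m - d := by omega
  rw [e5, e6]
  have f1 : ((m.factorial : ℝ)) ≠ 0 := by exact_mod_cast m.factorial_ne_zero
  have f2 : (((n - m - d).factorial : ℝ)) ≠ 0 := by exact_mod_cast (n - m - d).factorial_ne_zero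
  have f3 : (((n - d).factorial : ℝ)) ≠ 0 := by exact_mod_cast (n - d).factorial_ne_zero
  have f4 : ((n.factorial : ℝ)) ≠ 0 := by exact_mod_cast n.factorial_ne_zero
  have f5 : (2 : ℝ) ^ n ≠ 0 := by positivity
  rw [hc]
  field_simp [hc]
end
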